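/- Define a sequence c_{τ−1}, c_{τ−2}, ..., c₀ of non-negative reals by c_{τ−1} = e and the recursion c_{i−1} = C(τ−i+e, τ−i+1) + Σ_{j=2}^{τ+1−i} C(j − c_{i+j−2}, j) interpreted with the polynomial binomial coefficient, for 1 ≤ i ≤ τ−1, where e ≥ 2 and τ ≥ 2. Then there exists a constant K (depending only on τ) such that |c_i| ≤ K · e^{2^{(τ−1)−i}} for all 0 ≤ i ≤ τ−1. -/

import Mathlib

open Filter Finset

/-- The binomial coefficient polynomial C(x, k) = x(x-1)...(x-k+1)/k! over ℝ. -/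
noncomputable def rchoose (x : ℝ) (k : ℕ) : ℝ :=
  (∏ i ∈ Finset.range k, (x - i)) / (Nat.factorial k)

lemma rchoose_abs_le (x : ℝ) (k : ℕ) : |rchoose x k| ≤ (|x| + k) ^ k := by
  have h1 : (1:ℝ) ≤ (Nat.factorial k : ℝ) := by
    exact_mod_cast Nat.one_le_iff_ne_zero.mpr (Nat.factorial_ne_zero k)
  have h2 : |rchoose x k| ≤ |∏ i ∈ Finset.range k, (x - i)| := by
    rw [rchoose, abs_div, abs_of_pos (by positivity : (0:ℝ) < (Nat.factorial k : ℝ))]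
    exact div_le_self (abs_nonneg _) h1
  refine h2.trans ?_
  rw [Finset.abs_prod]
  calc ∏ i ∈ Finset.range k, |x - (i:ℝ)|
      ≤ ∏ _i ∈ Finset.range k, (|x| + k) := by
        apply Finset.prod_le_prod (fun i _ => abs_nonneg _)
        intro i hi
        have hik : (i:ℝ) ≤ k := by exact_mod_cast (Finset.mem_range.mp hi).le
        have h3 : |x - (i:ℝ)| ≤ |x| + |(i:ℝ)| := abs_sub x i
        have h4 : |(i:ℝ)| = (i:ℝ) := abs_of_nonneg (by positivity)
        linarith
    _ = (|x| + k) ^ k := by rw [Finset.prod_const, Finset.card_range]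

/-- The recursion c_{i-1} = C(τ-i+e, τ-i+1) + Σ_{j=2}^{τ+1-i} C(j - c_{i+j-2}, j) with
c_{τ-1} = e satisfies |c_i| ≤ K e^{2^{(τ-1)-i}} for a constant K depending only on τ. -/
theorem recursion_double_exponential (τ : ℕ) (hτ : 2 ≤ τ) :
    ∃ K : ℝ, ∀ e : ℝ, 2 ≤ e → ∀ c : ℕ → ℝ,
      (∀ i ≤ τ - 1, 0 ≤ c i) →
      c (τ - 1) = e →
      (∀ i, 1 ≤ i → i ≤ τ - 1 →
        c (i - 1) = rchoose (((τ - i : ℕ) : ℝ) + e) (τ - i + 1)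
          + ∑ j ∈ Finset.Icc 2 (τ + 1 - i), rchoose ((j : ℝ) - c (i + j - 2)) j) →
      ∀ i ≤ τ - 1, |c i| ≤ K * e ^ (2 ^ (τ - 1 - i)) := by
  suffices h : ∀ d : ℕ, ∃ K : ℝ, 1 ≤ K ∧ ∀ e : ℝ, 2 ≤ e → ∀ c : ℕ → ℝ,
      (∀ i ≤ τ - 1, 0 ≤ c i) →
      c (τ - 1) = e →
      (∀ i, 1 ≤ i → i ≤ τ - 1 →
        c (i - 1) = rchoose (((τ - i : ℕ) : ℝ) + e) (τ - i + 1)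
          + ∑ j ∈ Finset.Icc 2 (τ + 1 - i), rchoose ((j : ℝ) - c (i + j - 2)) j) →
      ∀ d' ≤ d, d' ≤ τ - 1 → |c (τ - 1 - d')| ≤ K * e ^ (2 ^ d') by
    obtain ⟨K, _, hK⟩ := h (τ - 1)
    refine ⟨K, fun e he c hpos hc0 hrec i hi => ?_⟩
    have hmain := hK e he c hpos hc0 hrec (τ - 1 - i) (by omega) (by omega)
    have hi' : τ - 1 - (τ - 1 - i) = i := by omega
    rwa [hi'] at hmain
  intro d
  induction d with
  | zero =>
    refine ⟨1, le_refl 1, fun e he c hpos hc0 hrec d' hd' _ => ?_⟩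
    interval_cases d'
    simp only [Nat.sub_zero, pow_zero, pow_one, one_mul, hc0]
    rw [abs_of_nonneg (by linarith)]
  | succ d ih =>
    obtain ⟨K, hK1, hK⟩ := ih
    by_cases hd : d + 1 ≤ τ - 1
    · -- the real inductive step
      set K' : ℝ := ((2*d+3 : ℕ) : ℝ) ^ (d+2) + ((d+1 : ℕ) : ℝ) * ((2*d+4 : ℝ) + K) ^ (d+2)
        with hK'def
      have hbase1 : (1:ℝ) ≤ ((2*d+3 : ℕ) : ℝ) := by exact_mod_cast Nat.le_add_left 1 _
      have hbase2 : (1:ℝ) ≤ (2*d+4 : ℝ) + K := by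
        have : (0:ℝ) ≤ (d:ℝ) := Nat.cast_nonneg d
        linarith
      have hKK' : K ≤ K' := by
        have h1 : (2*d+4 : ℝ) + K ≤ ((2*d+4 : ℝ) + K) ^ (d+2) := by
          calc (2*d+4 : ℝ) + K = ((2*d+4 : ℝ) + K) ^ 1 := (pow_one _).symm
            _ ≤ ((2*d+4 : ℝ) + K) ^ (d+2) := pow_le_pow_right₀ hbase2 (by omega)
        have h2 : (1:ℝ) ≤ ((d+1 : ℕ) : ℝ) := by exact_mod_cast Nat.le_add_left 1 _
        have h3 : (0:ℝ) ≤ ((2*d+3 : ℕ) : ℝ) ^ (d+2) := by positivity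
        nlinarith [pow_nonneg (le_trans zero_le_one hbase2) (d+2)]
      have hK'1 : (1:ℝ) ≤ K' := le_trans hK1 hKK'
      refine ⟨K', hK'1, fun e he c hpos hc0 hrec d' hd' hd'τ => ?_⟩
      have he1 : (1:ℝ) ≤ e := by linarith
      have hepow1 : ∀ n : ℕ, (1:ℝ) ≤ e ^ n := fun n => one_le_pow₀ he1
      by_cases hdd : d' ≤ d
      · -- reuse the inductive bound
        have := hK e he c hpos hc0 hrec d' hdd hd'τ
        have : |c (τ - 1 - d')| ≤ K * e ^ (2 ^ d') := this
        have hmul : K * e ^ (2 ^ d') ≤ K' * e ^ (2 ^ d') :=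
          mul_le_mul_of_nonneg_right hKK' (by positivity)
        linarith
      · have hd'eq : d' = d + 1 := by omega
        subst hd'eq
        -- apply the recursion at i = τ - 1 - d
        set i := τ - 1 - d with hidef
        have hi1 : 1 ≤ i := by omega
        have hiτ : i ≤ τ - 1 := by omega
        have hrec' := hrec i hi1 hiτ
        have hτi : τ - i = d + 1 := by omega
        have hτ1i : τ + 1 - i = d + 2 := by omega
        have hieq : i - 1 = τ - 1 - (d + 1) := by omega
        rw [hτi, hτ1i, hieq] at hrec'
        -- bound the first term
        have hfirst : |rchoose (((d+1 : ℕ) : ℝ) + e) (d + 1 + 1)|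
            ≤ ((2*d+3 : ℕ) : ℝ) ^ (d+2) * e ^ (2 ^ (d+1)) := by
          have h1 := rchoose_abs_le (((d+1 : ℕ) : ℝ) + e) (d + 1 + 1)
          have habs : |((d+1 : ℕ) : ℝ) + e| = ((d+1 : ℕ) : ℝ) + e :=
            abs_of_nonneg (by positivity)
          rw [habs] at h1
          have h2 : ((d+1 : ℕ) : ℝ) + e + ((d + 1 + 1 : ℕ) : ℝ) ≤ ((2*d+3 : ℕ) : ℝ) * e := by
            push_cast
            nlinarith
          have h3 : (((d+1 : ℕ) : ℝ) + e + ((d + 1 + 1 : ℕ) : ℝ)) ^ (d+1+1)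
              ≤ (((2*d+3 : ℕ) : ℝ) * e) ^ (d+2) := by
            apply pow_le_pow_left₀ (by positivity) h2
          have h4 : (((2*d+3 : ℕ) : ℝ) * e) ^ (d+2)
              = ((2*d+3 : ℕ) : ℝ) ^ (d+2) * e ^ (d+2) := mul_pow _ _ _
          have h5 : e ^ (d+2) ≤ e ^ (2 ^ (d+1)) := by
            apply pow_le_pow_right₀ he1
            have := Nat.lt_two_pow_self (n := d+1)
            omega
          calc |rchoose (((d+1 : ℕ) : ℝ) + e) (d + 1 + 1)|
              ≤ (((d+1 : ℕ) : ℝ) + e + ((d + 1 + 1 : ℕ) : ℝ)) ^ (d+1+1) := h1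
            _ ≤ (((2*d+3 : ℕ) : ℝ) * e) ^ (d+2) := h3
            _ = ((2*d+3 : ℕ) : ℝ) ^ (d+2) * e ^ (d+2) := h4
            _ ≤ ((2*d+3 : ℕ) : ℝ) ^ (d+2) * e ^ (2 ^ (d+1)) := by
                apply mul_le_mul_of_nonneg_left h5 (by positivity)
        -- bound each summand
        have hterm : ∀ j ∈ Finset.Icc 2 (d + 2),
            |rchoose ((j : ℝ) - c (i + j - 2)) j|
              ≤ ((2*d+4 : ℝ) + K) ^ (d+2) * e ^ (2 ^ (d+1)) := by
          intro j hj
          obtain ⟨hj2, hjd⟩ := Finset.mem_Icc.mp hj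
          set d'' := d + 2 - j with hd''def
          have hd''d : d'' ≤ d := by omega
          have hd''τ : d'' ≤ τ - 1 := by omega
          have hind : i + j - 2 = τ - 1 - d'' := by omega
          have hcb := hK e he c hpos hc0 hrec d'' hd''d hd''τ
          rw [← hind] at hcb
          have h1 := rchoose_abs_le ((j : ℝ) - c (i + j - 2)) j
          have h2 : |(j : ℝ) - c (i + j - 2)| ≤ (j : ℝ) + K * e ^ (2 ^ d'') := by
            have := abs_sub (j : ℝ) (c (i + j - 2))
            have hjabs : |(j:ℝ)| = (j:ℝ) := abs_of_nonneg (by positivity)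
            linarith
          have hjr : (j : ℝ) ≤ (d+2 : ℝ) := by exact_mod_cast hjd
          have h3 : |(j : ℝ) - c (i + j - 2)| + (j : ℝ)
              ≤ ((2*d+4 : ℝ) + K) * e ^ (2 ^ d'') := by
            have hp := hepow1 (2 ^ d'')
            nlinarith
          have h4 : (|(j : ℝ) - c (i + j - 2)| + (j : ℝ)) ^ j
              ≤ (((2*d+4 : ℝ) + K) * e ^ (2 ^ d'')) ^ j := by
            apply pow_le_pow_left₀ (by positivity) h3
          have h5 : (((2*d+4 : ℝ) + K) * e ^ (2 ^ d'')) ^ j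
              = ((2*d+4 : ℝ) + K) ^ j * e ^ (2 ^ d'' * j) := by
            rw [mul_pow, ← pow_mul]
          have h6 : ((2*d+4 : ℝ) + K) ^ j ≤ ((2*d+4 : ℝ) + K) ^ (d+2) :=
            pow_le_pow_right₀ hbase2 (by omega)
          have hjle : j ≤ 2 ^ (j - 1) := by
            have h2p := Nat.lt_two_pow_self (n := j - 1)
            omega
          have hexp : 2 ^ d'' * j ≤ 2 ^ (d+1) := by
            calc 2 ^ d'' * j ≤ 2 ^ d'' * 2 ^ (j-1) := Nat.mul_le_mul_left _ hjle
              _ = 2 ^ (d'' + (j - 1)) := (pow_add 2 _ _).symm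
              _ ≤ 2 ^ (d + 1) := Nat.pow_le_pow_right (by norm_num) (by omega)
          have h7 : e ^ (2 ^ d'' * j) ≤ e ^ (2 ^ (d+1)) := pow_le_pow_right₀ he1 hexp
          calc |rchoose ((j : ℝ) - c (i + j - 2)) j|
              ≤ (|(j : ℝ) - c (i + j - 2)| + (j : ℝ)) ^ j := h1
            _ ≤ ((2*d+4 : ℝ) + K) ^ j * e ^ (2 ^ d'' * j) := by rw [← h5]; exact h4
            _ ≤ ((2*d+4 : ℝ) + K) ^ (d+2) * e ^ (2 ^ (d+1)) := by
                apply mul_le_mul h6 h7 (by positivity) (by positivity)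
        -- combine
        have hsum : |∑ j ∈ Finset.Icc 2 (d + 2), rchoose ((j : ℝ) - c (i + j - 2)) j|
            ≤ ((d+1 : ℕ) : ℝ) * (((2*d+4 : ℝ) + K) ^ (d+2) * e ^ (2 ^ (d+1))) := by
          calc |∑ j ∈ Finset.Icc 2 (d + 2), rchoose ((j : ℝ) - c (i + j - 2)) j|
              ≤ ∑ j ∈ Finset.Icc 2 (d + 2), |rchoose ((j : ℝ) - c (i + j - 2)) j| :=
                Finset.abs_sum_le_sum_abs _ _
            _ ≤ ∑ _j ∈ Finset.Icc 2 (d + 2), ((2*d+4 : ℝ) + K) ^ (d+2) * e ^ (2 ^ (d+1)) :=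
                Finset.sum_le_sum hterm
            _ = ((d+1 : ℕ) : ℝ) * (((2*d+4 : ℝ) + K) ^ (d+2) * e ^ (2 ^ (d+1))) := by
                rw [Finset.sum_const, Nat.card_Icc, nsmul_eq_mul]
                have hcard : d + 2 + 1 - 2 = d + 1 := by omega
                rw [hcard]
        calc |c (τ - 1 - (d + 1))|
            ≤ |rchoose (((d+1 : ℕ) : ℝ) + e) (d + 1 + 1)|
              + |∑ j ∈ Finset.Icc 2 (d + 2), rchoose ((j : ℝ) - c (i + j - 2)) j| := by
              rw [hrec']; exact abs_add_le _ _
          _ ≤ ((2*d+3 : ℕ) : ℝ) ^ (d+2) * e ^ (2 ^ (d+1))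
              + ((d+1 : ℕ) : ℝ) * (((2*d+4 : ℝ) + K) ^ (d+2) * e ^ (2 ^ (d+1))) := by
              linarith
          _ = K' * e ^ (2 ^ (d+1)) := by rw [hK'def]; ring
    · -- vacuous extension: d' ≤ d+1 and d' ≤ τ-1 < d+1 imply d' ≤ d
      refine ⟨K, hK1, fun e he c hpos hc0 hrec d' hd' hd'τ => ?_⟩
      exact hK e he c hpos hc0 hrec d' (by omega) hd'τ
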